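/- Let q be a prime power, n ≥ 1, F = 𝔽_{q^n}, and let m be a positive integer with gcd(m,n) = 1. Then the C_F^m-set Γ = {[x] ∈ PG(2,q^n) : x₁x₃^{q^m} = x₂^{q^m+1}} is a set of type (0,1,2,q+1) with respect to lines: for every line ℓ of PG(2,q^n), |ℓ ∩ Γ| ∈ {0, 1, 2, q+1}. -/

import Mathlib

open scoped LinearAlgebra.Projectivization

open Polynomial in
lemma aux_card_pow_eq_one (K : Type*) [Field K] [Fintype K] {d : ℕ} (hd : 0 < d)
    (hdvd : d ∣ Fintype.card K - 1) : {y : K | y ^ d = 1}.ncard = d := by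
  classical
  have hN : Fintype.card Kˣ = Fintype.card K - 1 := Fintype.card_units K
  set N := Fintype.card Kˣ with hNdef
  have hdvd' : d ∣ N := hN ▸ hdvd
  have hNpos : 0 < N := Fintype.card_pos
  have hedpos : 0 < N / d := Nat.div_pos (Nat.le_of_dvd hNpos hdvd') hd
  set ψ : Kˣ →* Kˣ := powMonoidHom d with hψ
  have hkerle : Nat.card (MonoidHom.ker ψ) ≤ d := by
    have h1 := card_nthRoots_subgroup_units (Units.coeHom K) Units.val_injective hd (1 : Kˣ)
    have h2 : Multiset.card (nthRoots d ((Units.coeHom K) (1:Kˣ))) ≤ d := card_nthRoots d _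
    have h3 : Nat.card (MonoidHom.ker ψ) = (Finset.univ.filter (fun g : Kˣ => g ^ d = 1)).card := by
      rw [Nat.card_eq_fintype_card, Fintype.card_subtype]
      congr 1
      ext g
      simp [MonoidHom.mem_ker, hψ, powMonoidHom_apply]
    omega
  have hrangele : Nat.card (MonoidHom.range ψ) ≤ N / d := by
    have hle : MonoidHom.range ψ ≤ MonoidHom.ker (powMonoidHom (N / d) : Kˣ →* Kˣ) := by
      rintro y ⟨x, rfl⟩
      simp only [MonoidHom.mem_ker, hψ, powMonoidHom_apply]
      rw [← pow_mul, Nat.mul_div_cancel' hdvd', pow_card_eq_one]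
    refine le_trans (Subgroup.card_le_of_le hle) ?_
    have h1 := card_nthRoots_subgroup_units (Units.coeHom K) Units.val_injective hedpos (1 : Kˣ)
    have h2 : Multiset.card (nthRoots (N/d) ((Units.coeHom K) (1:Kˣ))) ≤ N/d := card_nthRoots _ _
    have h3 : Nat.card (MonoidHom.ker (powMonoidHom (N / d) : Kˣ →* Kˣ))
        = (Finset.univ.filter (fun g : Kˣ => g ^ (N/d) = 1)).card := by
      rw [Nat.card_eq_fintype_card, Fintype.card_subtype]
      congr 1
      ext g
      simp [MonoidHom.mem_ker, powMonoidHom_apply]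
    omega
  have hiso : Nat.card (Kˣ ⧸ MonoidHom.ker ψ) = Nat.card (MonoidHom.range ψ) :=
    Nat.card_congr (QuotientGroup.quotientKerEquivRange ψ).toEquiv
  have hprod : N = Nat.card (Kˣ ⧸ MonoidHom.ker ψ) * Nat.card (MonoidHom.ker ψ) := by
    rw [hNdef, ← Nat.card_eq_fintype_card]
    exact Subgroup.card_eq_card_quotient_mul_card_subgroup _
  have hkge : d ≤ Nat.card (MonoidHom.ker ψ) := by
    have h1 : d * (N / d) = N := Nat.mul_div_cancel' hdvd'
    have h2 : N ≤ (N / d) * Nat.card (MonoidHom.ker ψ) := by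
      calc N = Nat.card (Kˣ ⧸ MonoidHom.ker ψ) * Nat.card (MonoidHom.ker ψ) := hprod
        _ ≤ (N/d) * Nat.card (MonoidHom.ker ψ) :=
          Nat.mul_le_mul_right _ (hiso ▸ hrangele)
    have h3 : (N/d) * d ≤ (N/d) * Nat.card (MonoidHom.ker ψ) := by
      calc (N/d) * d = N := by rw [mul_comm]; exact h1
        _ ≤ _ := h2
    exact Nat.le_of_mul_le_mul_left h3 hedpos
  have hker : Nat.card (MonoidHom.ker ψ) = d := le_antisymm hkerle hkge
  have himg : {y : K | y ^ d = 1} = Units.val '' {u : Kˣ | u ^ d = 1} := by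
    ext y
    constructor
    · intro hy
      have hyu : IsUnit y := IsUnit.of_mul_eq_one (y ^ (d-1)) (by
        rw [← pow_succ', show d - 1 + 1 = d from by omega]; exact hy)
      refine ⟨hyu.unit, ?_, rfl⟩
      simp only [Set.mem_setOf_eq]
      ext
      push_cast
      simpa using hy
    · rintro ⟨u, hu, rfl⟩
      simp only [Set.mem_setOf_eq] at hu ⊢
      have := congrArg Units.val hu
      push_cast at this
      simpa using this
  rw [himg, Set.ncard_image_of_injective _ Units.val_injective, ← Nat.card_coe_set_eq]
  have hfin : Nat.card {u : Kˣ | u ^ d = 1} = Nat.card (MonoidHom.ker ψ) :=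
    Nat.card_congr (Equiv.setCongr (by ext u; simp [MonoidHom.mem_ker, hψ, powMonoidHom_apply]))
  rw [hfin, hker]

lemma aux_bezout {m n : ℕ} (hm : 0 < m) (hn : 1 ≤ n) (hmn : Nat.gcd m n = 1) :
    ∃ u v : ℕ, m * u = n * v + 1 := by
  rcases eq_or_lt_of_le hn with h1 | h1
  · rw [← h1]; exact ⟨1, m - 1, by omega⟩
  · obtain ⟨u, -, hu⟩ := Nat.exists_mul_mod_eq_one_of_coprime hmn h1
    refine ⟨u, m * u / n, ?_⟩
    rw [← hu]
    exact (Nat.div_add_mod (m*u) n).symm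

lemma aux_iter {K : Type*} [Field K] (A j : ℕ) (x : K) (hx : x ^ A = x) : x ^ A ^ j = x := by
  induction j with
  | zero => simp
  | succ j ih => rw [pow_succ, pow_mul, ih, hx]

lemma aux_fixed (K : Type*) [Field K] [Fintype K] (q n m : ℕ)
    (hF : Fintype.card K = q ^ n) (hm : 0 < m) (hn : 1 ≤ n) (hmn : Nat.gcd m n = 1)
    (y : K) : y ^ (q ^ m) = y ↔ y ^ q = y := by
  constructor
  · intro h
    obtain ⟨u, v, huv⟩ := aux_bezout hm hn hmn
    have h1 : y ^ q ^ (m*u) = y := by rw [pow_mul]; exact aux_iter _ u y h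
    have h2 : y ^ q ^ (n*v) = y := by
      rw [pow_mul]
      refine aux_iter _ v y ?_
      rw [← hF]
      exact FiniteField.pow_card y
    calc y ^ q = (y ^ q ^ (n*v)) ^ q := by rw [h2]
      _ = y ^ (q ^ (n*v) * q) := (pow_mul y (q^(n*v)) q).symm
      _ = y ^ q ^ (n*v+1) := by rw [pow_succ]
      _ = y ^ q ^ (m*u) := by rw [huv]
      _ = y := h1
  · intro h
    exact aux_iter q m y h

lemma aux_char (K : Type*) [Field K] [Fintype K] {p k n : ℕ} (hp : p.Prime) (hk : 0 < k)
    (hn : 1 ≤ n) (hF : Fintype.card K = (p ^ k) ^ n) : CharP K p := by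
  have hchar := ringChar.charP K
  obtain ⟨s, hr, hcard⟩ := FiniteField.card K (ringChar K)
  have h1 : p ∣ Fintype.card K := by
    rw [hF, ← pow_mul]
    exact dvd_pow_self p (by positivity)
  rw [hcard] at h1
  have h2 : p ∣ ringChar K := hp.dvd_of_dvd_pow h1
  have h3 : p = ringChar K := (Nat.prime_dvd_prime_iff_eq hp hr).mp h2
  rw [h3]; exact hchar

lemma aux_core (K : Type*) [Field K] [Fintype K] (q n m : ℕ)
    (hq : IsPrimePow q) (hn : 1 ≤ n) (hm : 0 < m) (hmn : Nat.gcd m n = 1)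
    (hF : Fintype.card K = q ^ n) (a b c : K) (ha : a ≠ 0) :
    {t : K | a * t ^ (q ^ m + 1) + b * t + c = 0}.ncard ∈ ({0, 1, 2, q + 1} : Set ℕ) := by
  classical
  obtain ⟨p, k, hpp, hk, hpk⟩ := hq
  have hp : p.Prime := hpp.nat_prime
  haveI : Fact p.Prime := ⟨hp⟩
  have hq2 : 2 ≤ q := by
    rw [← hpk]
    calc 2 ≤ p := hp.two_le
      _ = p ^ 1 := (pow_one p).symm
      _ ≤ p ^ k := Nat.pow_le_pow_right hp.pos hk
  set Q := q ^ m with hQdef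
  have hQ2 : 2 ≤ Q := by
    calc 2 ≤ q := hq2
      _ = q ^ 1 := (pow_one q).symm
      _ ≤ q ^ m := Nat.pow_le_pow_right (by omega) hm
  haveI : CharP K p := aux_char K hp hk hn (by rw [hF, hpk])
  have hQp : Q = p ^ (k * m) := by rw [hQdef, ← hpk, pow_mul]
  have frob_add : ∀ x y : K, (x + y) ^ Q = x ^ Q + y ^ Q := by
    intro x y; rw [hQp]; exact add_pow_char_pow x y p (k*m)
  have frob_sub : ∀ x y : K, (x - y) ^ Q = x ^ Q - y ^ Q := by
    intro x y; rw [hQp]; exact sub_pow_char_pow x y (k*m)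
  have powQ_inj : Function.Injective (fun x : K => x ^ Q) := by
    intro x y h
    simp only at h
    have h1 : (x - y) ^ Q = 0 := by rw [frob_sub, h, sub_self]
    have h2 : x - y = 0 := pow_eq_zero_iff (show Q ≠ 0 from by omega) |>.mp h1
    exact sub_eq_zero.mp h2
  set S := {t : K | a * t ^ (Q + 1) + b * t + c = 0} with hSdef
  haveI : Finite K := Finite.of_fintype K
  rcases S.eq_empty_or_nonempty with hS | ⟨t₀, ht₀⟩
  · rw [hS]; simp
  have ht₀' : a * t₀ ^ (Q + 1) + b * t₀ + c = 0 := ht₀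
  set d := a * t₀ ^ Q + b with hddef
  have expand : ∀ s : K, a * (t₀ + s) ^ (Q + 1) + b * (t₀ + s) + c
      = a * s ^ (Q+1) + a * t₀ * s ^ Q + d * s + (a * t₀ ^ (Q+1) + b * t₀ + c) := by
    intro s
    have h1 : (t₀ + s) ^ (Q+1) = (t₀ ^ Q + s ^ Q) * (t₀ + s) := by rw [pow_succ, frob_add]
    have h2 : t₀ ^ (Q+1) = t₀ ^ Q * t₀ := pow_succ _ _
    have h3 : s ^ (Q+1) = s ^ Q * s := pow_succ _ _
    rw [h1, h2, h3, hddef]; ring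
  have key : ∀ t : K, t ∈ S ↔ a * (t - t₀) ^ (Q+1) + a * t₀ * (t - t₀) ^ Q + d * (t - t₀) = 0 := by
    intro t
    have h4 : t₀ + (t - t₀) = t := by ring
    have := expand (t - t₀)
    rw [h4, ht₀', add_zero] at this
    simp only [hSdef, Set.mem_setOf_eq, this]
  by_cases hd : d = 0
  · -- at most two roots
    have hsub : S ⊆ {t₀, 0} := by
      intro t ht
      by_cases h : t = t₀
      · left; exact h
      · right
        have hs : t - t₀ ≠ 0 := sub_ne_zero.mpr h
        have h1 := (key t).mp ht
        rw [hd, zero_mul, add_zero] at h1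
        have h2 : a * (t - t₀) ^ Q * ((t - t₀) + t₀) = 0 := by
          rw [← h1, pow_succ]; ring
        rcases mul_eq_zero.mp h2 with h3 | h3
        · rcases mul_eq_zero.mp h3 with h4 | h4
          · exact absurd h4 ha
          · exact absurd h4 (pow_ne_zero _ hs)
        · have : t = 0 := by linear_combination h3
          exact this
    have hcard1 : 0 < S.ncard := (Set.ncard_pos (Set.toFinite S)).mpr ⟨t₀, ht₀⟩
    have hcard2 : S.ncard ≤ 2 := by
      refine le_trans (Set.ncard_le_ncard hsub (Set.toFinite _)) ?_
      refine le_trans (Set.ncard_insert_le _ _) ?_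
      simp
    simp only [Set.mem_insert_iff, Set.mem_singleton_iff]
    omega
  · -- d ≠ 0
    set T := {u : K | d * u ^ Q + a * t₀ * u + a = 0} with hTdef
    have hTne : ∀ u ∈ T, u ≠ 0 := by
      rintro u hu rfl
      simp only [hTdef, Set.mem_setOf_eq] at hu
      rw [zero_pow (by omega), mul_zero, mul_zero, zero_add, zero_add] at hu
      exact ha hu
    have keyinv : ∀ s : K, s ≠ 0 →
        (a * s ^ (Q+1) + a * t₀ * s ^ Q + d * s = 0 ↔
          d * (s⁻¹) ^ Q + a * t₀ * s⁻¹ + a = 0) := by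
      intro s hs
      have hfac : d * (s⁻¹) ^ Q + a * t₀ * s⁻¹ + a
          = (a * s ^ (Q+1) + a * t₀ * s ^ Q + d * s) * (s⁻¹) ^ (Q+1) := by
        rw [pow_succ, pow_succ]
        have hsQ : s ^ Q * (s⁻¹) ^ Q = 1 := by rw [← mul_pow, mul_inv_cancel₀ hs, one_pow]
        have hsi : s * s⁻¹ = 1 := mul_inv_cancel₀ hs
        linear_combination (-(d * (s⁻¹) ^ Q) - a) * hsi + (-(a * t₀ * s⁻¹) - a * s * s⁻¹) * hsQ
      constructor
      · intro h; rw [hfac, h, zero_mul]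
      · intro h
        rw [hfac] at h
        rcases mul_eq_zero.mp h with h1 | h1
        · exact h1
        · exact absurd h1 (pow_ne_zero _ (inv_ne_zero hs))
    have hdecomp : S = insert t₀ ((fun u : K => t₀ + u⁻¹) '' T) := by
      ext t
      constructor
      · intro ht
        by_cases h : t = t₀
        · exact Or.inl h
        · right
          have hs : t - t₀ ≠ 0 := sub_ne_zero.mpr h
          have h1 := (keyinv (t - t₀) hs).mp ((key t).mp ht)
          refine ⟨(t - t₀)⁻¹, h1, ?_⟩
          simp only
          rw [inv_inv]
          ring
      · rintro (rfl | ⟨u, hu, rfl⟩)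
        · exact ht₀
        · have hu0 : u ≠ 0 := hTne u hu
          have hs : (u⁻¹ : K) ≠ 0 := inv_ne_zero hu0
          have h4 : t₀ + u⁻¹ - t₀ = u⁻¹ := by ring
          rw [key, h4]
          rw [keyinv _ hs, inv_inv]
          exact hu
    have ht₀notin : t₀ ∉ (fun u : K => t₀ + u⁻¹) '' T := by
      rintro ⟨u, hu, heq⟩
      simp only at heq
      have : (u⁻¹ : K) = 0 := by linear_combination heq
      exact hTne u hu (inv_eq_zero.mp this)
    have hinj : Set.InjOn (fun u : K => t₀ + u⁻¹) T := by
      intro u hu v hv h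
      simp only at h
      have : (u⁻¹ : K) = v⁻¹ := by linear_combination h
      exact inv_injective this
    have hScount : S.ncard = T.ncard + 1 := by
      rw [hdecomp, Set.ncard_insert_of_notMem ht₀notin (Set.toFinite _),
        Set.ncard_image_of_injOn hinj]
    by_cases ht0 : t₀ = 0
    · -- T is a single point
      obtain ⟨u₀, hu₀⟩ := (Finite.injective_iff_surjective.mp powQ_inj) (-(a/d))
      simp only at hu₀
      have hT : T = {u₀} := by
        ext u
        simp only [hTdef, ht0, Set.mem_setOf_eq, mul_zero, zero_mul, add_zero, zero_add,
          Set.mem_singleton_iff]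
        constructor
        · intro h
          apply powQ_inj
          simp only
          rw [hu₀]
          field_simp
          linear_combination h
        · rintro rfl
          rw [hu₀]
          field_simp
          ring
      rw [hScount, hT, Set.ncard_singleton]
      simp
    · -- affine count
      rcases T.eq_empty_or_nonempty with hT | ⟨u₁, hu₁⟩
      · rw [hScount, hT, Set.ncard_empty]
        simp
      · have hu₁' : d * u₁ ^ Q + a * t₀ * u₁ + a = 0 := hu₁
        set K₀ := {u : K | d * u ^ Q + a * t₀ * u = 0} with hK₀def
        have htrans : T = (fun w : K => w + u₁) '' K₀ := by
          ext u
          constructor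
          · intro hu
            refine ⟨u - u₁, ?_, by simp⟩
            simp only [hK₀def, Set.mem_setOf_eq]
            have hu' : d * u ^ Q + a * t₀ * u + a = 0 := hu
            rw [frob_sub]
            linear_combination hu' - hu₁'
          · rintro ⟨w, hw, rfl⟩
            have hw' : d * w ^ Q + a * t₀ * w = 0 := hw
            show d * (w + u₁) ^ Q + a * t₀ * (w + u₁) + a = 0
            rw [frob_add]
            linear_combination hw' + hu₁'
        have hTK : T.ncard = K₀.ncard := by
          rw [htrans, Set.ncard_image_of_injective _ (add_left_injective u₁)]
        set e := -(a * t₀) / d with hedef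
        have he : e ≠ 0 := by
          rw [hedef]
          apply div_ne_zero
          · simp [ha, ht0]
          · exact hd
        have hK₀ : K₀ = insert 0 {u : K | u ^ (Q - 1) = e} := by
          ext u
          simp only [hK₀def, Set.mem_setOf_eq, Set.mem_insert_iff]
          constructor
          · intro h
            by_cases hu0 : u = 0
            · exact Or.inl hu0
            · right
              have hQQ : u ^ Q = u ^ (Q-1) * u := by
                rw [← pow_succ, show Q - 1 + 1 = Q from by omega]
              rw [hQQ] at h
              have h2 : u * (d * u ^ (Q-1) + a * t₀) = 0 := by linear_combination h
              rcases mul_eq_zero.mp h2 with h3 | h3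
              · exact absurd h3 hu0
              · rw [hedef]
                field_simp
                linear_combination h3
          · rintro (rfl | h)
            · rw [zero_pow (by omega), mul_zero, mul_zero, zero_add]
            · have hQQ : u ^ Q = u ^ (Q-1) * u := by
                rw [← pow_succ, show Q - 1 + 1 = Q from by omega]
              rw [hQQ, h, hedef]
              field_simp
              ring
        have h0notin : (0:K) ∉ {u : K | u ^ (Q - 1) = e} := by
          simp only [Set.mem_setOf_eq]
          rw [zero_pow (by omega)]
          exact fun h => he h.symm
        have hK₀count : K₀.ncard = {u : K | u ^ (Q - 1) = e}.ncard + 1 := by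
          rw [hK₀, Set.ncard_insert_of_notMem h0notin (Set.toFinite _)]
        set M := {u : K | u ^ (Q - 1) = e} with hMdef
        rcases M.eq_empty_or_nonempty with hM | ⟨x₀, hx₀⟩
        · rw [hScount, hTK, hK₀count, hM, Set.ncard_empty]
          simp
        · have hx₀' : x₀ ^ (Q - 1) = e := hx₀
          have hx₀0 : x₀ ≠ 0 := by
            rintro rfl
            rw [zero_pow (by omega)] at hx₀'
            exact he hx₀'.symm
          have hMimg : M = (fun y : K => x₀ * y) '' {y : K | y ^ (Q - 1) = 1} := by
            ext u
            simp only [hMdef, Set.mem_setOf_eq, Set.mem_image]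
            constructor
            · intro h
              refine ⟨x₀⁻¹ * u, ?_, by field_simp⟩
              rw [mul_pow, h, ← hx₀', inv_pow]
              exact inv_mul_cancel₀ (pow_ne_zero _ hx₀0)
            · rintro ⟨y, hy, rfl⟩
              rw [mul_pow, hy, hx₀', mul_one]
          have hroots1 : {y : K | y ^ (Q - 1) = 1} = {y : K | y ^ (q - 1) = 1} := by
            ext y
            simp only [Set.mem_setOf_eq]
            have hiff1 : y ^ (Q - 1) = 1 ↔ (y ≠ 0 ∧ y ^ Q = y) := by
              constructor
              · intro h
                have hy0 : y ≠ 0 := by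
                  rintro rfl
                  rw [zero_pow (by omega)] at h
                  exact one_ne_zero h.symm
                refine ⟨hy0, ?_⟩
                calc y ^ Q = y ^ (Q-1) * y := by rw [← pow_succ, show Q-1+1 = Q from by omega]
                  _ = 1 * y := by rw [h]
                  _ = y := one_mul y
              · rintro ⟨hy0, hy⟩
                have : y ^ (Q-1) * y = 1 * y := by
                  rw [one_mul, ← pow_succ, show Q-1+1 = Q from by omega]; exact hy
                exact mul_right_cancel₀ hy0 this
            have hiff2 : y ^ (q - 1) = 1 ↔ (y ≠ 0 ∧ y ^ q = y) := by
              constructor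
              · intro h
                have hy0 : y ≠ 0 := by
                  rintro rfl
                  rw [zero_pow (by omega)] at h
                  exact one_ne_zero h.symm
                refine ⟨hy0, ?_⟩
                calc y ^ q = y ^ (q-1) * y := by rw [← pow_succ, show q-1+1 = q from by omega]
                  _ = 1 * y := by rw [h]
                  _ = y := one_mul y
              · rintro ⟨hy0, hy⟩
                have : y ^ (q-1) * y = 1 * y := by
                  rw [one_mul, ← pow_succ, show q-1+1 = q from by omega]; exact hy
                exact mul_right_cancel₀ hy0 this
            rw [hiff1, hiff2, aux_fixed K q n m hF hm hn hmn y]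
          have hcount1 : {y : K | y ^ (q - 1) = 1}.ncard = q - 1 := by
            apply aux_card_pow_eq_one K (by omega)
            rw [hF]
            have := Nat.sub_dvd_pow_sub_pow q 1 n
            rwa [one_pow] at this
          have hMcount : M.ncard = q - 1 := by
            rw [hMimg, Set.ncard_image_of_injective _ (mul_right_injective₀ hx₀0), hroots1,
              hcount1]
          rw [hScount, hTK, hK₀count, hMcount]
          simp only [Set.mem_insert_iff, Set.mem_singleton_iff]
          omega


open scoped LinearAlgebra.Projectivization

/-- The line of PG(2,F) determined by a 2-dimensional subspace `W` of `F³`: the set of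
projective points whose representative vectors lie in `W`. -/
def projLine (F : Type*) [Field F] (W : Submodule F (Fin 3 → F)) :
    Set (ℙ F (Fin 3 → F)) :=
  {P : ℙ F (Fin 3 → F) | P.rep ∈ W}

/-- The C_F^m-set Γ = {[x] ∈ PG(2,qⁿ) : x₁x₃^(q^m) = x₂^(q^m+1)} is a set
of type (0,1,2,q+1) with respect to lines. -/
theorem CFm_set_type_wrt_lines
    (q n m : ℕ) (hq : IsPrimePow q) (hn : 1 ≤ n) (hm : 0 < m)
    (hmn : Nat.gcd m n = 1)
    (F : Type*) [Field F] [Fintype F] (hF : Fintype.card F = q ^ n)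
    (Γ : Set (ℙ F (Fin 3 → F)))
    (hΓ : Γ = {P : ℙ F (Fin 3 → F) |
      P.rep 0 * (P.rep 2) ^ (q ^ m) = (P.rep 1) ^ (q ^ m + 1)})
    (W : Submodule F (Fin 3 → F)) (hW : Module.finrank F ↥W = 2) :
    (projLine F W ∩ Γ).ncard ∈ ({0, 1, 2, q + 1} : Set ℕ) := by
  classical
  haveI : Finite (ℙ F (Fin 3 → F)) := Quotient.finite _
  have hq2 : 2 ≤ q := hq.two_le
  have hQ1 : 0 < q ^ m := by positivity
  -- get a linear functional with kernel W
  have h3 : Module.finrank F (Fin 3 → F) = 3 := by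
    rw [Module.finrank_fin_fun]
  have hquot : Module.finrank F ((Fin 3 → F) ⧸ W) = 1 := by
    have := Submodule.finrank_quotient_add_finrank W
    omega
  obtain ⟨e⟩ := FiniteDimensional.nonempty_linearEquiv_of_finrank_eq
    (R := F) (M := (Fin 3 → F) ⧸ W) (M' := F) (by rw [hquot, Module.finrank_self])
  set φ : (Fin 3 → F) →ₗ[F] F := (e : ((Fin 3 → F) ⧸ W) →ₗ[F] F).comp W.mkQ with hφdef
  have hker : LinearMap.ker φ = W := by
    rw [hφdef, LinearMap.ker_comp, LinearEquiv.ker, Submodule.comap_bot, Submodule.ker_mkQ]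
  set a := φ (Pi.single 0 1) with hadef
  set b := φ (Pi.single 1 1) with hbdef
  set c := φ (Pi.single 2 1) with hcdef
  have happ : ∀ v : Fin 3 → F, φ v = a * v 0 + b * v 1 + c * v 2 := by
    intro v
    have hv : v = v 0 • (Pi.single 0 1 : Fin 3 → F) + v 1 • (Pi.single 1 1 : Fin 3 → F) + v 2 • (Pi.single 2 1 : Fin 3 → F) := by
      funext i
      fin_cases i <;> simp [Pi.single_apply]
    conv_lhs => rw [hv]
    simp only [map_add, map_smul, smul_eq_mul, ← hadef, ← hbdef, ← hcdef]
    ring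
  set S := projLine F W ∩ Γ with hSdef
  have hmemS : ∀ P : ℙ F (Fin 3 → F),
      P ∈ S ↔ (φ P.rep = 0 ∧ P.rep 0 * (P.rep 2) ^ (q^m) = (P.rep 1) ^ (q^m + 1)) := by
    intro P
    rw [hSdef, Set.mem_inter_iff, hΓ]
    simp only [projLine, Set.mem_setOf_eq]
    rw [← hker, LinearMap.mem_ker]
  have hscale : ∀ (α : F), α ≠ 0 → ∀ v : Fin 3 → F,
      ((α * v 0) * (α * v 2) ^ (q^m) = (α * v 1) ^ (q^m + 1) ↔
        v 0 * v 2 ^ (q^m) = v 1 ^ (q^m + 1)) := by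
    intro α hα v
    rw [mul_pow, mul_pow]
    constructor
    · intro h
      have hcan : α ^ (q^m+1) * (v 0 * v 2 ^ (q^m)) = α ^ (q^m+1) * v 1 ^ (q^m+1) := by
        linear_combination h
      exact mul_left_cancel₀ (pow_ne_zero _ hα) hcan
    · intro h
      calc α * v 0 * (α ^ (q^m) * v 2 ^ (q^m)) = α ^ (q^m+1) * (v 0 * v 2 ^ (q^m)) := by ring
        _ = α ^ (q^m+1) * v 1 ^ (q^m+1) := by rw [h]
  have hcond : ∀ (v : Fin 3 → F) (hv : v ≠ 0),
      (Projectivization.mk F v hv ∈ S ↔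
        (φ v = 0 ∧ v 0 * (v 2) ^ (q^m) = (v 1) ^ (q^m + 1))) := by
    intro v hv
    rw [hmemS]
    obtain ⟨α, hα⟩ := Projectivization.exists_smul_eq_mk_rep F v hv
    have hα0 : (α : F) ≠ 0 := α.ne_zero
    have hrep : ∀ i, (Projectivization.mk F v hv).rep i = (α : F) * v i := by
      intro i; rw [← hα]; simp [Units.smul_def]
    have hφrep : φ (Projectivization.mk F v hv).rep = (α : F) * φ v := by
      rw [← hα, Units.smul_def, map_smul, smul_eq_mul]
    rw [hφrep, hrep 0, hrep 1, hrep 2]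
    exact and_congr (by simp [mul_eq_zero, hα0]) (hscale (α : F) hα0 v)
  -- the two special points families
  have hR0 : (![1, 0, 0] : Fin 3 → F) ≠ 0 := by
    intro h; simpa using congrFun h 0
  set R : ℙ F (Fin 3 → F) := Projectivization.mk F ![1,0,0] hR0 with hRdef
  have hgv : ∀ t : F, (![t ^ (q^m+1), t, 1] : Fin 3 → F) ≠ 0 := by
    intro t h; simpa using congrFun h 2
  set g : F → ℙ F (Fin 3 → F) :=
    fun t => Projectivization.mk F ![t ^ (q^m+1), t, 1] (hgv t) with hgdef
  have hRS : R ∈ S ↔ a = 0 := by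
    have h1 : φ ![1,0,0] = a := by rw [happ]; simp
    have h2 : (![1,0,0] : Fin 3 → F) 0 * ((![1,0,0] : Fin 3 → F) 2) ^ (q^m)
        = ((![1,0,0] : Fin 3 → F) 1) ^ (q^m+1) := by
      simp [zero_pow hQ1.ne']
    rw [hRdef, hcond _ hR0, h1]
    exact ⟨fun h => h.1, fun h => ⟨h, h2⟩⟩
  have hgS : ∀ t : F, (g t ∈ S ↔ a * t ^ (q^m+1) + b * t + c = 0) := by
    intro t
    have h1 : φ ![t^(q^m+1), t, 1] = a * t^(q^m+1) + b * t + c := by rw [happ]; simp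
    have h2 : (![t^(q^m+1),t,1] : Fin 3 → F) 0 * ((![t^(q^m+1),t,1] : Fin 3 → F) 2) ^ (q^m)
        = ((![t^(q^m+1),t,1] : Fin 3 → F) 1) ^ (q^m+1) := by simp
    rw [hgdef]
    simp only
    rw [hcond _ (hgv t), h1]
    simp [h2]
  have hginj : Function.Injective g := by
    intro t s h
    rw [hgdef] at h
    simp only at h
    rw [Projectivization.mk_eq_mk_iff] at h
    obtain ⟨α, hα⟩ := h
    have h1 := congrFun hα 1
    simp only [Pi.smul_apply, Units.smul_def, smul_eq_mul, Matrix.cons_val_one,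
      Matrix.head_cons, Matrix.cons_val_zero] at h1
    have h2' : (α : F) = 1 := by
      have h2 := congrFun hα 2
      simpa [Units.smul_def] using h2
    rw [← h1, h2', one_mul]
  have hRg : ∀ t, R ≠ g t := by
    intro t h
    rw [hRdef, hgdef] at h
    simp only at h
    rw [Projectivization.mk_eq_mk_iff] at h
    obtain ⟨α, hα⟩ := h
    have h2 := congrFun hα 2
    simp [Units.smul_def] at h2
  -- forward classification of points of S
  have hforward : ∀ P ∈ S, (a = 0 ∧ P = R) ∨
      ∃ t : F, a * t^(q^m+1) + b*t + c = 0 ∧ P = g t := by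
    intro P hP
    have hv := P.rep_nonzero
    have hPmk : Projectivization.mk F P.rep hv = P := P.mk_rep
    have hcondP := hcond P.rep hv
    rw [hPmk] at hcondP
    obtain ⟨h1, h2⟩ := hcondP.mp hP
    by_cases hv2 : P.rep 2 = 0
    · left
      have hrep1 : P.rep 1 = 0 := by
        have h5 : P.rep 1 ^ (q^m+1) = 0 := by
          rw [← h2, hv2, zero_pow hQ1.ne', mul_zero]
        exact pow_eq_zero_iff (show q^m+1 ≠ 0 from by omega) |>.mp h5
      have hrep0 : P.rep 0 ≠ 0 := by
        intro h0
        apply hv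
        funext i
        fin_cases i <;> simp [h0, hrep1, hv2]
      have ha0 : a = 0 := by
        rw [happ, hrep1, hv2, mul_zero, mul_zero, add_zero, add_zero] at h1
        rcases mul_eq_zero.mp h1 with h | h
        · exact h
        · exact absurd h hrep0
      refine ⟨ha0, ?_⟩
      rw [← hPmk, hRdef]
      rw [Projectivization.mk_eq_mk_iff']
      refine ⟨P.rep 0, ?_⟩
      funext i
      fin_cases i <;> simp [hrep1, hv2]
    · right
      set t := P.rep 1 / P.rep 2 with htdef
      have hvec : P.rep = P.rep 2 • ![t ^ (q^m+1), t, 1] := by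
        funext i
        fin_cases i
        · show P.rep 0 = P.rep 2 • (t ^ (q^m+1))
          rw [smul_eq_mul, htdef, div_pow, eq_comm, mul_comm, div_mul_eq_mul_div,
            div_eq_iff (pow_ne_zero _ hv2)]
          linear_combination -(P.rep 2) * h2
        · show P.rep 1 = P.rep 2 • t
          rw [smul_eq_mul, htdef, mul_div_cancel₀ _ hv2]
        · show P.rep 2 = P.rep 2 • (1:F)
          rw [smul_eq_mul, mul_one]
      have hroot : a * t ^ (q^m+1) + b * t + c = 0 := by
        have h1' : φ P.rep = P.rep 2 * (a * t^(q^m+1) + b * t + c) := by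
          conv_lhs => rw [hvec]
          rw [map_smul, smul_eq_mul]
          congr 1
          rw [happ]
          simp
        rw [h1'] at h1
        rcases mul_eq_zero.mp h1 with h | h
        · exact absurd h hv2
        · exact h
      refine ⟨t, hroot, ?_⟩
      rw [← hPmk, hgdef]
      simp only
      rw [Projectivization.mk_eq_mk_iff']
      exact ⟨P.rep 2, hvec.symm⟩
  by_cases ha : a = 0
  · by_cases hb : b = 0
    · -- only the point R
      have hc : c ≠ 0 := by
        intro hc
        have hzero : ∀ v, φ v = 0 := by
          intro v; rw [happ, ha, hb, hc]; ring
        have htop : W = ⊤ := by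
          rw [← hker, eq_top_iff]
          intro v _
          rw [LinearMap.mem_ker]
          exact hzero v
        rw [htop, finrank_top, h3] at hW
        omega
      have hS1 : S = {R} := by
        ext P
        constructor
        · intro hP
          rcases hforward P hP with ⟨_, hPR⟩ | ⟨t, ht, hPg⟩
          · exact hPR
          · rw [ha, hb] at ht
            rw [zero_mul, zero_mul, zero_add, zero_add] at ht
            exact absurd ht hc
        · rintro rfl
          exact hRS.mpr ha
      rw [hS1, Set.ncard_singleton]
      simp
    · -- R and one affine point
      have hS2 : S = {R, g (-(c/b))} := by
        ext P
        constructor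
        · intro hP
          rcases hforward P hP with ⟨_, hPR⟩ | ⟨t, ht, hPg⟩
          · exact Or.inl hPR
          · right
            rw [ha, zero_mul, zero_add] at ht
            have : t = -(c/b) := by
              field_simp
              linear_combination ht
            rw [hPg, this]
            exact Set.mem_singleton _
        · rintro (rfl | rfl)
          · exact hRS.mpr ha
          · rw [hgS]
            rw [ha]
            field_simp
            ring
      rw [hS2, Set.ncard_pair (hRg _)]
      simp
  · -- line not through R : reduce to the root count
    have hS3 : S = g '' {t : F | a * t ^ (q^m+1) + b * t + c = 0} := by
      ext P
      constructor
      · intro hP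
        rcases hforward P hP with ⟨h0, _⟩ | ⟨t, ht, hPg⟩
        · exact absurd h0 ha
        · exact ⟨t, ht, hPg.symm⟩
      · rintro ⟨t, ht, rfl⟩
        exact (hgS t).mpr ht
    rw [hS3, Set.ncard_image_of_injective _ hginj]
    exact aux_core F q n m hq hn hm hmn hF a b c ha
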